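/- Let γ ∈ (0,1), b* = 1/(1-γ), and define p_t = p_t(b*) by p₁ = γ^γ and p_t = [ p_{t-1} · γb* / (γb* + 1 - p_{t-1}) ]^γ (note γb* + 1 = b* since b* is the fixed point). Then p_t ≥ γ^{γ(1-γ^t)/(1-γ)} ≥ γ^{γ/(1-γ)} > 0 for all t ≥ 1. -/
import Mathlib


theorem pgss_p_lower_bound (γ : ℝ) (hγ0 : 0 < γ) (hγ1 : γ < 1)
    (p : ℕ → ℝ)
    (h1 : p 1 = γ ^ γ)
    (hrec : ∀ t : ℕ, 1 ≤ t →
      p (t + 1) = (p t * (γ * (1 / (1 - γ))) / (γ * (1 / (1 - γ)) + 1 - p t)) ^ γ) :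
    ∀ t : ℕ, 1 ≤ t →
      p t ≥ γ ^ (γ * (1 - γ ^ t) / (1 - γ)) ∧
      γ ^ (γ * (1 - γ ^ t) / (1 - γ)) ≥ γ ^ (γ / (1 - γ)) ∧
      (0 : ℝ) < γ ^ (γ / (1 - γ)) := by
  have h1γ : 0 < 1 - γ := by linarith
  set b : ℝ := γ * (1 / (1 - γ)) with hb
  have hbpos : 0 < b := by positivity
  have key : ∀ t : ℕ, 1 ≤ t → γ ^ (γ * (1 - γ ^ t) / (1 - γ)) ≤ p t ∧ p t ≤ 1 := by
    intro t ht
    induction t with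
    | zero => omega
    | succ n ih =>
      rcases Nat.lt_or_ge n 1 with h | h
      · have hn : n = 0 := by omega
        subst hn
        have he : γ * (1 - γ ^ 1) / (1 - γ) = γ := by
          rw [pow_one]; field_simp
        refine ⟨by rw [he, h1], ?_⟩
        rw [h1]
        exact Real.rpow_le_one hγ0.le hγ1.le hγ0.le
      · obtain ⟨hlo, hhi⟩ := ih h
        set e : ℝ := γ * (1 - γ ^ n) / (1 - γ) with hee
        have hppos : 0 < p n := lt_of_lt_of_le (Real.rpow_pos_of_pos hγ0 e) hlo
        have hDpos : 0 < b + 1 - p n := by linarith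
        set x : ℝ := p n * b / (b + 1 - p n) with hx
        have hxpos : 0 < x := by positivity
        have hrecn := hrec n h
        have hx1 : x ≤ p n := by
          rw [hx, div_le_iff₀ hDpos]
          nlinarith
        have hx2 : γ * p n ≤ x := by
          rw [hx, le_div_iff₀ hDpos]
          have hbg : b * (1 - γ) = γ := by
            rw [hb]; field_simp
          have h3 : p n * (b * (1 - γ)) = p n * γ := by rw [hbg]
          nlinarith [mul_nonneg (mul_nonneg hγ0.le hppos.le) hppos.le]
        constructor
        · have hlow : γ * γ ^ e ≤ x := by
            calc γ * γ ^ e ≤ γ * p n := by nlinarith [Real.rpow_pos_of_pos hγ0 e]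
              _ ≤ x := hx2
          have h1e : γ * γ ^ e = γ ^ (1 + e) := by
            rw [Real.rpow_add hγ0, Real.rpow_one]
          have : (γ ^ (1 + e) : ℝ) ^ γ ≤ x ^ γ := by
            apply Real.rpow_le_rpow (Real.rpow_nonneg hγ0.le _) _ hγ0.le
            rw [← h1e]; exact hlow
          rw [hrecn]
          calc γ ^ (γ * (1 - γ ^ (n + 1)) / (1 - γ)) = (γ ^ (1 + e)) ^ γ := by
                rw [← Real.rpow_natCast γ (n+1)] at *
                rw [← Real.rpow_mul hγ0.le]
                congr 1
                rw [hee, ← Real.rpow_natCast γ n]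
                push_cast
                rw [Real.rpow_add hγ0 n 1, Real.rpow_one]
                field_simp
                ring
            _ ≤ x ^ γ := this
        · rw [hrecn]
          have : x ^ γ ≤ 1 := Real.rpow_le_one hxpos.le (le_trans hx1 hhi) hγ0.le
          exact this
  intro t ht
  refine ⟨(key t ht).1, ?_, Real.rpow_pos_of_pos hγ0 _⟩
  apply Real.rpow_le_rpow_of_exponent_ge hγ0 hγ1.le
  have hpt : (0:ℝ) ≤ γ ^ t := by positivity
  rw [div_le_div_iff₀ h1γ h1γ]
  nlinarith [mul_nonneg (mul_nonneg hγ0.le h1γ.le) hpt]
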